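/- arXiv:1404.2537 — 2 statements merged into one kernel-verified Lean document; each statement's English description precedes it below -/
import Mathlib

section
/- The quantity d_{R1} := 2·L_{R1}·|Ψ_{R11} \ Ψ_{R12}| + 2·max(0, min(L_{R1}·|Ψ_{R11} ∩ Ψ_{R12}|, (L_{R1}·|Ψ_{R12}| − L_{T2}·|Ψ_{T12}|)⁺ + L_{T2}·|Ψ_{T12} \ Ψ_{T22}|)) satisfies the identity d_{R1} = min(2·L_{R1}·|Ψ_{R11}|, d_sum − 2·L_{T2}·|Ψ_{T22}|). -/
open MeasureTheory Set

/-- Real-valued Lebesgue measure of a set of reals. -/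
noncomputable def μr (S : Set ℝ) : ℝ := (volume S).toReal

lemma μr_nonneg (S : Set ℝ) : 0 ≤ μr S := ENNReal.toReal_nonneg

lemma μr_split (A B : Set ℝ) (hA : A ⊆ Icc (-1) 1) (hB : MeasurableSet B) :
    μr A = μr (A \ B) + μr (A ∩ B) := by
  have hfin : volume A ≠ ⊤ :=
    ((measure_mono hA).trans_lt measure_Icc_lt_top).ne
  have h1 : volume (A \ B) ≠ ⊤ :=
    ((measure_mono diff_subset).trans_lt hfin.lt_top).ne
  have h2 : volume (A ∩ B) ≠ ⊤ :=
    ((measure_mono inter_subset_left).trans_lt hfin.lt_top).ne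
  unfold μr
  rw [← measure_diff_add_inter A hB, ENNReal.toReal_add h1 h2]

theorem dR1_identity
    (L_T1 L_R1 L_T2 L_R2 : ℝ)
    (hLT1 : 0 ≤ L_T1) (hLR1 : 0 ≤ L_R1) (hLT2 : 0 ≤ L_T2) (hLR2 : 0 ≤ L_R2)
    (ΨT11 ΨT12 ΨT22 ΨR11 ΨR12 ΨR22 : Set ℝ)
    (hmT11 : MeasurableSet ΨT11) (hmT12 : MeasurableSet ΨT12)
    (hmT22 : MeasurableSet ΨT22) (hmR11 : MeasurableSet ΨR11)
    (hmR12 : MeasurableSet ΨR12) (hmR22 : MeasurableSet ΨR22)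
    (hsT11 : ΨT11 ⊆ Icc (-1) 1) (hsT12 : ΨT12 ⊆ Icc (-1) 1)
    (hsT22 : ΨT22 ⊆ Icc (-1) 1) (hsR11 : ΨR11 ⊆ Icc (-1) 1)
    (hsR12 : ΨR12 ⊆ Icc (-1) 1) (hsR22 : ΨR22 ⊆ Icc (-1) 1)
    (dsum dR1 : ℝ)
    (hdsum : dsum = 2 * L_T2 * μr (ΨT22 \ ΨT12) + 2 * L_R1 * μr (ΨR11 \ ΨR12)
        + 2 * max (L_T2 * μr ΨT12) (L_R1 * μr ΨR12))
    (hdR1 : dR1 = 2 * L_R1 * μr (ΨR11 \ ΨR12)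
        + 2 * max 0 (min (L_R1 * μr (ΨR11 ∩ ΨR12))
            (max (L_R1 * μr ΨR12 - L_T2 * μr ΨT12) 0 + L_T2 * μr (ΨT12 \ ΨT22))))
    :
    dR1 = min (2 * L_R1 * μr ΨR11) (dsum - 2 * L_T2 * μr ΨT22) := by
  have eA : L_R1 * μr ΨR11 = L_R1 * μr (ΨR11 \ ΨR12) + L_R1 * μr (ΨR11 ∩ ΨR12) := by
    rw [μr_split ΨR11 ΨR12 hsR11 hmR12]; ring
  have eV : L_T2 * μr ΨT22 = L_T2 * μr (ΨT22 \ ΨT12) + L_T2 * μr (ΨT12 ∩ ΨT22) := by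
    rw [μr_split ΨT22 ΨT12 hsT22 hmT12, inter_comm]; ring
  have eT : L_T2 * μr ΨT12 = L_T2 * μr (ΨT12 \ ΨT22) + L_T2 * μr (ΨT12 ∩ ΨT22) := by
    rw [μr_split ΨT12 ΨT22 hsT12 hmT22]; ring
  have nb : 0 ≤ L_R1 * μr (ΨR11 ∩ ΨR12) := mul_nonneg hLR1 (μr_nonneg _)
  have ns : 0 ≤ L_T2 * μr (ΨT12 \ ΨT22) := mul_nonneg hLT2 (μr_nonneg _)
  rw [hdR1, hdsum]
  rcases le_total (L_T2 * μr ΨT12) (L_R1 * μr ΨR12) with h3 | h3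
  · rw [max_eq_left (by linarith : (0:ℝ) ≤ L_R1 * μr ΨR12 - L_T2 * μr ΨT12),
      max_eq_right h3]
    rcases le_total (L_R1 * μr (ΨR11 ∩ ΨR12))
        (L_R1 * μr ΨR12 - L_T2 * μr ΨT12 + L_T2 * μr (ΨT12 \ ΨT22)) with h1 | h1
    · rw [min_eq_left h1, max_eq_right nb, min_eq_left (by linarith)]
      linarith
    · rw [min_eq_right h1, max_eq_right (by linarith), min_eq_right (by linarith)]
      linarith
  · rw [max_eq_right (by linarith : L_R1 * μr ΨR12 - L_T2 * μr ΨT12 ≤ (0:ℝ)),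
      max_eq_left h3]
    rcases le_total (L_R1 * μr (ΨR11 ∩ ΨR12))
        ((0:ℝ) + L_T2 * μr (ΨT12 \ ΨT22)) with h1 | h1
    · rw [min_eq_left h1, max_eq_right nb, min_eq_left (by linarith)]
      linarith
    · rw [min_eq_right h1, max_eq_right (by linarith), min_eq_right (by linarith)]
      linarith
end

section
/- (Corner point of the full-duplex degree-of-freedom region, Lemma 2, first corner.) Define d2' casewise: d2' = min(d_{T2}, 2·L_{R2}·|Ψ_{R22}|) if L_{T1}·|Ψ_{T11}| ≥ L_{R1}·|Ψ_{R11}|, and d2' = min(δ_{T2}, 2·L_{R2}·|Ψ_{R22}|) otherwise. Then d2' = min(d2max, d_sum − d1max). In particular, if d_sum ≤ d1max + d2max then the degree-of-freedom pair (d1', d2') with d1' = d1max equals the corner point (d1max, d_sum − d1max). -/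
open MeasureTheory Set

lemma vol_ne_top {s : Set ℝ} (hs : s ⊆ Icc (-1) 1) : volume s ≠ ⊤ := by
  have h := measure_mono (μ := (volume : Measure ℝ)) hs
  rw [Real.volume_Icc] at h
  exact ne_top_of_le_ne_top (by simp) h

lemma mur_nonneg (s : Set ℝ) : 0 ≤ μr s := ENNReal.toReal_nonneg

lemma mur_mono {s t : Set ℝ} (h : s ⊆ t) (ht : t ⊆ Icc (-1) 1) : μr s ≤ μr t :=
  ENNReal.toReal_mono (vol_ne_top ht) (measure_mono h)

lemma mur_diff {s t : Set ℝ} (ht : MeasurableSet t) (hs : s ⊆ Icc (-1) 1) :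
    μr (s \ t) = μr s - μr (s ∩ t) := by
  have h := measure_inter_add_diff s ht (μ := volume)
  have h1 : volume (s ∩ t) ≠ ⊤ :=
    ne_top_of_le_ne_top (vol_ne_top hs) (measure_mono inter_subset_left)
  have h2 : volume (s \ t) ≠ ⊤ :=
    ne_top_of_le_ne_top (vol_ne_top hs) (measure_mono diff_subset)
  unfold μr
  rw [← h, ENNReal.toReal_add h1 h2]
  ring

set_option maxHeartbeats 4000000 in
lemma key_corner (lt1 lr1 lt2 lr2 a b c p q j t r : ℝ)
    (hc0 : 0 ≤ lt2*c) (hca : lt2*c ≤ lt2*a) (hcb : lt2*c ≤ lt2*b)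
    (hj0 : 0 ≤ lr1*j) (hjp : lr1*j ≤ lr1*p) (hjq : lr1*j ≤ lr1*q) :
    (if lr1 * p ≤ lt1 * t
      then min (2 * lt2 * (a - c)
        + 2 * max 0 (min (lt2 * c) (max (lt2 * b - lr1 * q) 0 + lr1 * (q - j))))
        (2 * lr2 * r)
      else min (2 * lt2 * (a - c)
        + 2 * min (lt2 * c) (lt2 * b - max (lt1 * t - (lr1 * (p - j)
            + max (lr1 * q - lt2 * b) 0)) 0)) (2 * lr2 * r))
    = min (2 * min (lt2 * a) (lr2 * r))
        (2 * lt2 * (a - c) + 2 * lr1 * (p - j) + 2 * max (lt2 * b) (lr1 * q)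
          - 2 * min (lt1 * t) (lr1 * p)) := by
  split_ifs with h <;> simp only [min_def, max_def] <;> split_ifs <;> linarith

theorem corner_point_one
    (L_T1 L_R1 L_T2 L_R2 : ℝ)
    (hLT1 : 0 ≤ L_T1) (hLR1 : 0 ≤ L_R1) (hLT2 : 0 ≤ L_T2) (hLR2 : 0 ≤ L_R2)
    (ΨT11 ΨT12 ΨT22 ΨR11 ΨR12 ΨR22 : Set ℝ)
    (hmT11 : MeasurableSet ΨT11) (hmT12 : MeasurableSet ΨT12)
    (hmT22 : MeasurableSet ΨT22) (hmR11 : MeasurableSet ΨR11)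
    (hmR12 : MeasurableSet ΨR12) (hmR22 : MeasurableSet ΨR22)
    (hsT11 : ΨT11 ⊆ Icc (-1) 1) (hsT12 : ΨT12 ⊆ Icc (-1) 1)
    (hsT22 : ΨT22 ⊆ Icc (-1) 1) (hsR11 : ΨR11 ⊆ Icc (-1) 1)
    (hsR12 : ΨR12 ⊆ Icc (-1) 1) (hsR22 : ΨR22 ⊆ Icc (-1) 1)
    (d1max d2max dsum dT2 δT2 d1' d2' : ℝ)
    (hd1max : d1max = 2 * min (L_T1 * μr ΨT11) (L_R1 * μr ΨR11))
    (hd2max : d2max = 2 * min (L_T2 * μr ΨT22) (L_R2 * μr ΨR22))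
    (hdsum : dsum = 2 * L_T2 * μr (ΨT22 \ ΨT12) + 2 * L_R1 * μr (ΨR11 \ ΨR12)
        + 2 * max (L_T2 * μr ΨT12) (L_R1 * μr ΨR12))
    (hdT2 : dT2 = 2 * L_T2 * μr (ΨT22 \ ΨT12)
        + 2 * max 0 (min (L_T2 * μr (ΨT22 ∩ ΨT12))
            (max (L_T2 * μr ΨT12 - L_R1 * μr ΨR12) 0 + L_R1 * μr (ΨR12 \ ΨR11))))
    (hδT2 : δT2 = 2 * L_T2 * μr (ΨT22 \ ΨT12)
        + 2 * min (L_T2 * μr (ΨT22 ∩ ΨT12))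
            (L_T2 * μr ΨT12 - max (L_T1 * μr ΨT11
              - (L_R1 * μr (ΨR11 \ ΨR12) + max (L_R1 * μr ΨR12 - L_T2 * μr ΨT12) 0)) 0))
    (hd2' : d2' = if L_R1 * μr ΨR11 ≤ L_T1 * μr ΨT11
        then min dT2 (2 * L_R2 * μr ΨR22)
        else min δT2 (2 * L_R2 * μr ΨR22))
    (hd1' : d1' = d1max)
    :
    d2' = min d2max (dsum - d1max) ∧
      (dsum ≤ d1max + d2max → (d1', d2') = (d1max, dsum - d1max)) := by
  have e1 : μr (ΨT22 \ ΨT12) = μr ΨT22 - μr (ΨT22 ∩ ΨT12) := mur_diff hmT12 hsT22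
  have e2 : μr (ΨR11 \ ΨR12) = μr ΨR11 - μr (ΨR11 ∩ ΨR12) := mur_diff hmR12 hsR11
  have e3 : μr (ΨR12 \ ΨR11) = μr ΨR12 - μr (ΨR11 ∩ ΨR12) := by
    rw [mur_diff hmR11 hsR12, Set.inter_comm]
  rw [e1] at hdsum hdT2 hδT2
  rw [e2] at hdsum hδT2
  rw [e3] at hdT2
  have hc0 : 0 ≤ L_T2 * μr (ΨT22 ∩ ΨT12) := mul_nonneg hLT2 (mur_nonneg _)
  have hca : L_T2 * μr (ΨT22 ∩ ΨT12) ≤ L_T2 * μr ΨT22 :=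
    mul_le_mul_of_nonneg_left (mur_mono inter_subset_left hsT22) hLT2
  have hcb : L_T2 * μr (ΨT22 ∩ ΨT12) ≤ L_T2 * μr ΨT12 :=
    mul_le_mul_of_nonneg_left (mur_mono inter_subset_right hsT12) hLT2
  have hj0 : 0 ≤ L_R1 * μr (ΨR11 ∩ ΨR12) := mul_nonneg hLR1 (mur_nonneg _)
  have hjp : L_R1 * μr (ΨR11 ∩ ΨR12) ≤ L_R1 * μr ΨR11 :=
    mul_le_mul_of_nonneg_left (mur_mono inter_subset_left hsR11) hLR1
  have hjq : L_R1 * μr (ΨR11 ∩ ΨR12) ≤ L_R1 * μr ΨR12 :=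
    mul_le_mul_of_nonneg_left (mur_mono inter_subset_right hsR12) hLR1
  have hmain : d2' = min d2max (dsum - d1max) := by
    rw [hd2', hdT2, hδT2, hd2max, hdsum, hd1max]
    exact key_corner L_T1 L_R1 L_T2 L_R2 (μr ΨT22) (μr ΨT12) (μr (ΨT22 ∩ ΨT12))
      (μr ΨR11) (μr ΨR12) (μr (ΨR11 ∩ ΨR12)) (μr ΨT11) (μr ΨR22)
      hc0 hca hcb hj0 hjp hjq
  refine ⟨hmain, fun hle => ?_⟩
  have : d2' = dsum - d1max := by
    rw [hmain, min_eq_right]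
    linarith
  rw [hd1', this]
end
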